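/- Let n ≥ 1 and k ≥ 0 be integers. Then in the ring of symmetric functions with an adjoined sequence of commuting formal variables s_0, s_1, s_2, …, the identity Σ_{j=0}^{k} [ Σ_{i=2}^{n} (i−1) h_{k−j} h_{n−i} s_{i+j−1} + Σ_{i=1}^{n−1} Σ_{ℓ=1}^{n−i} h_{k−j} h_{n−ℓ−i} p_{ℓ+j} s_{i−1} ] = Σ_{i=2}^{n} [ (i−1) h_{n−i} Σ_{j=0}^{k+i−1} h_{k+i−1−j} s_j + (k+i−n) h_{k+i−1} Σ_{j=0}^{n−i} h_{n−i−j} s_j ] holds. -/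

import Mathlib

open MvPolynomial Finset

/-- The polynomial ring `Λ[s_0, s_1, …]` over (the `N`-variable truncation of) the ring of
symmetric functions over `ℚ`, with countably many commuting indeterminates `s_j`. -/
noncomputable abbrev LamS (N : ℕ) : Type := MvPolynomial ℕ (MvPolynomial (Fin N) ℚ)

/-- the complete homogeneous symmetric function `h_k`, viewed in `Λ[s]`. -/
noncomputable def hh (N k : ℕ) : LamS N := MvPolynomial.C (hsymm (Fin N) ℚ k)

/-- the power sum `p_m`, viewed in `Λ[s]`. -/
noncomputable def ppw (N m : ℕ) : LamS N := MvPolynomial.C (psum (Fin N) ℚ m)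

/-- the formal variable `s_j` (a single strand with `j` dots). -/
noncomputable def s (N j : ℕ) : LamS N := MvPolynomial.X j

section NewtonAux

variable {σ : Type*} {R : Type*} [Fintype σ] [DecidableEq σ] [CommRing R]

lemma keyA (i : σ) (m : ℕ) :
    ∑ u ∈ range m, X (R := R) i ^ (m - u) * hsymm σ R u
      = ∑ t : Sym σ m, (Multiset.count i t.1) • (t.1.map X).prod := by
  induction m with
  | zero =>
    simp [show ((default : Sym σ 0) : Multiset σ) = 0 from rfl]
  | succ m ih =>
    have e1 : ∀ u ∈ range m, X (R := R) i ^ (m+1-u) * hsymm σ R u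
        = X i * (X i ^ (m-u) * hsymm σ R u) := by
      intro u hu
      have : m + 1 - u = (m - u) + 1 := by simp only [mem_range] at hu; omega
      rw [this, pow_succ]; ring
    have step1 : ∑ u ∈ range (m+1), X (R := R) i ^ (m+1-u) * hsymm σ R u
        = X i * hsymm σ R m + X i * ∑ u ∈ range m, X (R := R) i ^ (m-u) * hsymm σ R u := by
      rw [Finset.sum_range_succ, Finset.sum_congr rfl e1, ← Finset.mul_sum]
      have h2 : m + 1 - m = 1 := by omega
      rw [h2, pow_one]; ring
    rw [step1, ih, Finset.mul_sum]
    have key : X (R := R) i * hsymm σ R m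
          + ∑ t : Sym σ m, X i * ((Multiset.count i t.1) • (t.1.map X).prod)
        = ∑ t : Sym σ m,
            (Multiset.count i (i ::ₛ t).1) • (((i ::ₛ t).1.map X).prod) := by
      rw [hsymm, Finset.mul_sum, ← Finset.sum_add_distrib]
      refine Finset.sum_congr rfl fun t _ => ?_
      have hc : (i ::ₛ t).1 = i ::ₘ t.1 := rfl
      simp only [hc, Multiset.count_cons_self, Multiset.map_cons, Multiset.prod_cons,
        nsmul_eq_mul, Nat.cast_add, Nat.cast_one]
      ring
    rw [key]
    have hfilter : ∑ t : Sym σ (m+1), (Multiset.count i t.1) • ((t.1.map (X (R := R))).prod)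
        = ∑ t ∈ Finset.univ.filter (fun t : Sym σ (m+1) => i ∈ t),
            (Multiset.count i t.1) • ((t.1.map X).prod) := by
      refine (Finset.sum_filter_of_ne fun t _ hne => ?_).symm
      by_contra hit
      exact hne (by rw [Multiset.count_eq_zero_of_notMem (fun h => hit h), zero_smul])
    rw [hfilter]
    refine Finset.sum_bij' (i := fun t _ => i ::ₛ t)
      (j := fun t ht => t.erase i (by simpa using Finset.mem_filter.mp ht |>.2))
      (fun t ht => ?_) (fun t ht => Finset.mem_univ _)
      (fun t ht => ?_) (fun t ht => ?_) (fun t ht => rfl)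
    · exact Finset.mem_filter.mpr ⟨Finset.mem_univ _, Sym.mem_cons_self i t⟩
    · -- j (i t) = t : erase of cons
      have := Sym.cons_erase (s := i ::ₛ t) (a := i) (Sym.mem_cons_self i t)
      rw [← Sym.cons_inj_right i]
      exact Sym.cons_erase _
    · exact Sym.cons_erase _

lemma newton (m : ℕ) :
    ∑ u ∈ range m, psum σ R (m - u) * hsymm σ R u = m • hsymm σ R m := by
  have h1 : ∑ u ∈ range m, psum σ R (m - u) * hsymm σ R u
      = ∑ i : σ, ∑ u ∈ range m, X (R := R) i ^ (m - u) * hsymm σ R u := by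
    rw [Finset.sum_comm]
    refine Finset.sum_congr rfl fun u _ => ?_
    rw [psum, Finset.sum_mul]
  rw [h1]
  have h2 : ∀ i : σ, ∑ u ∈ range m, X (R := R) i ^ (m - u) * hsymm σ R u
      = ∑ t : Sym σ m, (Multiset.count i t.1) • (t.1.map X).prod := fun i => keyA i m
  simp only [h2]
  rw [Finset.sum_comm, hsymm, Finset.smul_sum]
  refine Finset.sum_congr rfl fun t _ => ?_
  rw [← Finset.sum_smul]
  congr 1
  rw [Multiset.sum_count_eq_card (fun a _ => Finset.mem_univ a)]
  exact t.2

end NewtonAux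

lemma hnewton (N m : ℕ) : ∑ u ∈ range m, ppw N (m - u) * hh N u = m • hh N m := by
  simp only [hh, ppw, ← map_mul]
  rw [← map_sum, newton, map_nsmul]

lemma key (N a k : ℕ) :
    ∑ j ∈ range (k+1), ∑ l ∈ Finset.Icc 1 a, hh N (k-j) * hh N (a-l) * ppw N (l+j)
      = ∑ t ∈ Finset.Icc 1 a, ((k : ℤ) + 2*t - a) • (hh N (k+t) * hh N (a-t)) := by
  rw [Finset.sum_comm]
  have inner : ∀ t ∈ Finset.Icc 1 a, ∑ j ∈ range (k+1), hh N (k-j) * hh N (a-t) * ppw N (t+j)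
      = hh N (a-t) * ∑ u ∈ range (k+1), ppw N (k+t-u) * hh N u := by
    intro t ht
    rw [Finset.mul_sum]
    refine Finset.sum_nbij' (i := fun j => k - j) (j := fun u => k - u) ?_ ?_ ?_ ?_ ?_ <;>
      simp only [mem_range]
    · intro j hj; omega
    · intro u hu; omega
    · intro j hj; omega
    · intro u hu; omega
    · intro j hj
      have h1 : k + t - (k - j) = t + j := by omega
      rw [h1]; ring
  rw [Finset.sum_congr rfl inner]
  have rhs : ∀ t ∈ Finset.Icc 1 a, ((k:ℤ) + 2*t - a) • (hh N (k+t) * hh N (a-t))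
      = hh N (a-t) * ∑ u ∈ range (k+t), ppw N (k+t-u) * hh N u
        - hh N (k+t) * ∑ u ∈ range (a-t), ppw N (a-t-u) * hh N u := by
    intro t ht
    simp only [mem_Icc] at ht
    rw [hnewton, hnewton]
    have h1 : ((k:ℤ) + 2*t - a) = ((k+t : ℕ) : ℤ) - ((a - t : ℕ) : ℤ) := by omega
    rw [h1, sub_smul, natCast_zsmul, natCast_zsmul, mul_smul_comm, mul_smul_comm,
      mul_comm (hh N (a-t)) (hh N (k+t))]
  rw [Finset.sum_congr rfl rhs, Finset.sum_sub_distrib, eq_sub_iff_add_eq]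
  have split : ∀ t ∈ Finset.Icc 1 a,
      hh N (a-t) * ∑ u ∈ range (k+t), ppw N (k+t-u) * hh N u
        = hh N (a-t) * ∑ u ∈ range (k+1), ppw N (k+t-u) * hh N u
          + hh N (a-t) * ∑ u ∈ Finset.Ico (k+1) (k+t), ppw N (k+t-u) * hh N u := by
    intro t ht
    simp only [mem_Icc] at ht
    rw [← mul_add]
    simp only [Finset.range_eq_Ico]
    rw [← Finset.sum_Ico_consecutive (fun x => ppw N (k + t - x) * hh N x) (by omega : 0 ≤ k+1) (by omega : k+1 ≤ k+t)]
  rw [Finset.sum_congr rfl split, Finset.sum_add_distrib]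
  rw [add_right_inj]
  -- Σ_t hh(k+t) Σ_{u<a-t} ppw(a-t-u) hh u = Σ_t hh(a-t) Σ_{u ∈ Ico (k+1)(k+t)} ppw(k+t-u) hh u
  have rein : ∀ t ∈ Finset.Icc 1 a,
      hh N (a-t) * ∑ u ∈ Finset.Ico (k+1) (k+t), ppw N (k+t-u) * hh N u
        = ∑ v ∈ range (t-1), hh N (a-t) * (ppw N (t-1-v) * hh N (k+1+v)) := by
    intro t ht
    simp only [mem_Icc] at ht
    rw [Finset.sum_Ico_eq_sum_range, Finset.mul_sum]
    have hr : k + t - (k+1) = t - 1 := by omega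
    rw [hr]
    refine Finset.sum_congr rfl fun v hv => ?_
    simp only [mem_range] at hv
    have : k + t - (k + 1 + v) = t - 1 - v := by omega
    rw [this]
  rw [Finset.sum_congr rfl rein]
  simp only [Finset.mul_sum]
  rw [Finset.sum_sigma', Finset.sum_sigma']
  refine Finset.sum_nbij' (i := fun x => ⟨a - x.2, x.1 - 1⟩) (j := fun y => ⟨y.2 + 1, a - y.1⟩)
    ?_ ?_ ?_ ?_ ?_
  · rintro ⟨b, c⟩ h; simp only [mem_sigma, mem_Icc, mem_range] at *; omega
  · rintro ⟨b, c⟩ h; simp only [mem_sigma, mem_Icc, mem_range] at *; omega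
  · rintro ⟨b, c⟩ h; simp only [mem_sigma, mem_Icc, mem_range] at h
    rw [Sigma.ext_iff]; simp only [heq_eq_eq, and_true, true_and]; omega
  · rintro ⟨b, c⟩ h; simp only [mem_sigma, mem_Icc, mem_range] at h
    rw [Sigma.ext_iff]; simp only [heq_eq_eq, and_true, true_and]; omega
  · rintro ⟨b, c⟩ h; simp only [mem_sigma, mem_Icc, mem_range] at h
    have h1 : a - (a - c) = c := by omega
    have h2 : k + 1 + (b - 1) = k + b := by omega
    have h3 : a - c - 1 - (b - 1) = a - b - c := by omega
    show hh N (k + b) * (ppw N (a - b - c) * hh N c)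
        = hh N (a - (a - c)) * (ppw N (a - c - 1 - (b - 1)) * hh N (k + 1 + (b - 1)))
    rw [h1, h2, h3]
    ring

set_option maxHeartbeats 2000000 in
/-- for `n ≥ 1` and `k ≥ 0`,
`Σ_{j=0}^{k} [ Σ_{i=2}^{n} (i−1) h_{k−j} h_{n−i} s_{i+j−1}
              + Σ_{i=1}^{n−1} Σ_{ℓ=1}^{n−i} h_{k−j} h_{n−ℓ−i} p_{ℓ+j} s_{i−1} ]
 = Σ_{i=2}^{n} [ (i−1) h_{n−i} Σ_{j=0}^{k+i−1} h_{k+i−1−j} s_j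
              + (k+i−n) h_{k+i−1} Σ_{j=0}^{n−i} h_{n−i−j} s_j ]`. -/
theorem stmt10 (n k : ℕ) (hn : 1 ≤ n) (N : ℕ) :
    ∑ j ∈ range (k + 1),
        ((∑ i ∈ Finset.Icc 2 n,
            (i - 1) • (hh N (k - j) * hh N (n - i) * s N (i + j - 1))) +
          ∑ i ∈ Finset.Icc 1 (n - 1), ∑ l ∈ Finset.Icc 1 (n - i),
            hh N (k - j) * hh N (n - l - i) * ppw N (l + j) * s N (i - 1))
      = ∑ i ∈ Finset.Icc 2 n,
          ((i - 1) • (hh N (n - i) * ∑ j ∈ range (k + i), hh N (k + i - 1 - j) * s N j) +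
            ((k : ℤ) + (i : ℤ) - (n : ℤ)) •
              (hh N (k + i - 1) * ∑ j ∈ range (n - i + 1), hh N (n - i - j) * s N j)) := by
  rw [Finset.sum_add_distrib, Finset.sum_add_distrib]
  -- Step 1: decompose R1 as L1-piece + D
  have hR1 : ∀ i ∈ Finset.Icc 2 n,
      (i - 1) • (hh N (n - i) * ∑ m ∈ range (k + i), hh N (k + i - 1 - m) * s N m)
      = (∑ j ∈ range (k+1), (i-1) • (hh N (k-j) * hh N (n-i) * s N (i+j-1)))
        + (i - 1) • (hh N (n - i) * ∑ m ∈ range (i-1), hh N (k + i - 1 - m) * s N m) := by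
    intro i hi
    simp only [mem_Icc] at hi
    have h1 : ∑ m ∈ Finset.Ico (i-1) (k+i), hh N (k + i - 1 - m) * s N m
        = ∑ j ∈ range (k+1), hh N (k - j) * s N (i + j - 1) := by
      rw [Finset.sum_Ico_eq_sum_range]
      rw [show k + i - (i - 1) = k + 1 by omega]
      refine Finset.sum_congr rfl fun j hj => ?_
      simp only [mem_range] at hj
      rw [show k + i - 1 - (i - 1 + j) = k - j by omega, show i - 1 + j = i + j - 1 by omega]
    have hsplit : ∑ m ∈ range (k + i), hh N (k + i - 1 - m) * s N m
        = ∑ m ∈ range (i-1), hh N (k + i - 1 - m) * s N m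
          + ∑ j ∈ range (k+1), hh N (k - j) * s N (i + j - 1) := by
      rw [← h1]
      simp only [Finset.range_eq_Ico]
      rw [← Finset.sum_Ico_consecutive _ (by omega : 0 ≤ i - 1) (by omega : i - 1 ≤ k + i)]
    rw [hsplit, mul_add, smul_add, add_comm]
    congr 1
    rw [Finset.mul_sum, Finset.smul_sum]
    refine Finset.sum_congr rfl fun j _ => ?_
    congr 1
    ring
  rw [Finset.sum_congr rfl hR1, Finset.sum_add_distrib]
  have hswap : ∑ j ∈ range (k + 1), ∑ i ∈ Finset.Icc 2 n,
        (i - 1) • (hh N (k - j) * hh N (n - i) * s N (i + j - 1))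
      = ∑ i ∈ Finset.Icc 2 n, ∑ j ∈ range (k+1),
        (i-1) • (hh N (k-j) * hh N (n-i) * s N (i+j-1)) := Finset.sum_comm
  rw [hswap, add_assoc]
  congr 1
  -- Remaining: L2 = D + R2
  -- L2 into coefficient form
  have hL2 : ∑ j ∈ range (k + 1), ∑ i ∈ Finset.Icc 1 (n - 1), ∑ l ∈ Finset.Icc 1 (n - i),
        hh N (k - j) * hh N (n - l - i) * ppw N (l + j) * s N (i - 1)
      = ∑ m ∈ range (n-1), ∑ t ∈ Finset.Icc 1 (n-1-m),
          ((k : ℤ) + 2*t - ((n-1-m : ℕ) : ℤ)) • (hh N (k+t) * hh N (n-1-m-t) * s N m) := by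
    rw [Finset.sum_comm]
    rw [show Finset.Icc 1 (n-1) = Finset.Ico 1 n by rw [← Finset.Ico_add_one_right_eq_Icc]; congr 1; omega]
    rw [Finset.sum_Ico_eq_sum_range]
    rw [show n - 1 = n - 1 by rfl]
    refine Finset.sum_congr rfl fun m hm => ?_
    simp only [mem_range] at hm
    have step1 : ∑ j ∈ range (k+1), ∑ l ∈ Finset.Icc 1 (n - (1 + m)),
          hh N (k - j) * hh N (n - l - (1 + m)) * ppw N (l + j) * s N (1 + m - 1)
        = (∑ j ∈ range (k+1), ∑ l ∈ Finset.Icc 1 (n-1-m),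
            hh N (k - j) * hh N ((n-1-m) - l) * ppw N (l + j)) * s N m := by
      rw [Finset.sum_mul]
      refine Finset.sum_congr rfl fun j _ => ?_
      rw [Finset.sum_mul, show n - (1 + m) = n - 1 - m by omega]
      refine Finset.sum_congr rfl fun l _ => ?_
      rw [show n - l - (1 + m) = n - 1 - m - l by omega, show 1 + m - 1 = m by omega]
    rw [step1, key, Finset.sum_mul]
    refine Finset.sum_congr rfl fun t _ => ?_
    rw [smul_mul_assoc]
  rw [hL2]
  -- D into (m,t) form
  have hD : ∑ i ∈ Finset.Icc 2 n,
        (i - 1) • (hh N (n - i) * ∑ m ∈ range (i-1), hh N (k + i - 1 - m) * s N m)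
      = ∑ m ∈ range (n-1), ∑ t ∈ Finset.Icc 1 (n-1-m),
          (m + t) • (hh N (n-1-m-t) * (hh N (k+t) * s N m)) := by
    have expand : ∀ i ∈ Finset.Icc 2 n,
        (i - 1) • (hh N (n - i) * ∑ m ∈ range (i-1), hh N (k + i - 1 - m) * s N m)
        = ∑ m ∈ range (i-1), (i-1) • (hh N (n-i) * (hh N (k+i-1-m) * s N m)) := by
      intro i _
      rw [Finset.mul_sum, Finset.smul_sum]
    rw [Finset.sum_congr rfl expand, Finset.sum_sigma', Finset.sum_sigma']
    refine Finset.sum_nbij' (i := fun x => ⟨x.2, x.1 - 1 - x.2⟩)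
      (j := fun y => ⟨y.1 + 1 + y.2, y.1⟩) ?_ ?_ ?_ ?_ ?_
    · rintro ⟨b, c⟩ h; simp only [mem_sigma, mem_Icc, mem_range] at *; omega
    · rintro ⟨b, c⟩ h; simp only [mem_sigma, mem_Icc, mem_range] at *; omega
    · rintro ⟨b, c⟩ h; simp only [mem_sigma, mem_Icc, mem_range] at h
      rw [Sigma.ext_iff]; simp only [heq_eq_eq, and_true, true_and]; omega
    · rintro ⟨b, c⟩ h; simp only [mem_sigma, mem_Icc, mem_range] at h
      rw [Sigma.ext_iff]; simp only [heq_eq_eq, and_true, true_and]; omega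
    · rintro ⟨b, c⟩ h; simp only [mem_sigma, mem_Icc, mem_range] at h
      show (b-1) • (hh N (n-b) * (hh N (k+b-1-c) * s N c))
          = (c + (b-1-c)) • (hh N (n-1-c-(b-1-c)) * (hh N (k+(b-1-c)) * s N c))
      rw [show c + (b-1-c) = b - 1 by omega, show n-1-c-(b-1-c) = n - b by omega,
        show k+(b-1-c) = k + b - 1 - c by omega]
  -- R2 into (m,t) form
  have hR2 : ∑ i ∈ Finset.Icc 2 n,
        ((k : ℤ) + (i : ℤ) - (n : ℤ)) •
          (hh N (k + i - 1) * ∑ m ∈ range (n - i + 1), hh N (n - i - m) * s N m)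
      = ∑ m ∈ range (n-1), ∑ t ∈ Finset.Icc 1 (n-1-m),
          ((k : ℤ) + ((t : ℤ) + 1) - (n : ℤ)) • (hh N (k+t) * (hh N (n-1-m-t) * s N m)) := by
    have expand : ∀ i ∈ Finset.Icc 2 n,
        ((k : ℤ) + (i : ℤ) - (n : ℤ)) •
          (hh N (k + i - 1) * ∑ m ∈ range (n - i + 1), hh N (n - i - m) * s N m)
        = ∑ m ∈ range (n-i+1), ((k : ℤ) + (i : ℤ) - (n : ℤ)) •
            (hh N (k+i-1) * (hh N (n-i-m) * s N m)) := by
      intro i _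
      rw [Finset.mul_sum, Finset.smul_sum]
    rw [Finset.sum_congr rfl expand, Finset.sum_sigma', Finset.sum_sigma']
    refine Finset.sum_nbij' (i := fun x => ⟨x.2, x.1 - 1⟩)
      (j := fun y => ⟨y.2 + 1, y.1⟩) ?_ ?_ ?_ ?_ ?_
    · rintro ⟨b, c⟩ h; simp only [mem_sigma, mem_Icc, mem_range] at *; omega
    · rintro ⟨b, c⟩ h; simp only [mem_sigma, mem_Icc, mem_range] at *; omega
    · rintro ⟨b, c⟩ h; simp only [mem_sigma, mem_Icc, mem_range] at h
      rw [Sigma.ext_iff]; simp only [heq_eq_eq, and_true, true_and]; omega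
    · rintro ⟨b, c⟩ h; simp only [mem_sigma, mem_Icc, mem_range] at h
      rw [Sigma.ext_iff]; simp only [heq_eq_eq, and_true, true_and]; omega
    · rintro ⟨b, c⟩ h; simp only [mem_sigma, mem_Icc, mem_range] at h
      show ((k : ℤ) + (b : ℤ) - (n : ℤ)) • (hh N (k+b-1) * (hh N (n-b-c) * s N c))
          = ((k : ℤ) + (((b-1 : ℕ) : ℤ) + 1) - (n : ℤ)) •
              (hh N (k+(b-1)) * (hh N (n-1-c-(b-1)) * s N c))
      rw [show ((k : ℤ) + (((b-1 : ℕ) : ℤ) + 1) - (n : ℤ)) = (k : ℤ) + (b : ℤ) - (n : ℤ) by omega,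
        show k+(b-1) = k + b - 1 by omega, show n-1-c-(b-1) = n - b - c by omega]
  rw [hD, hR2, ← Finset.sum_add_distrib]
  refine Finset.sum_congr rfl fun m hm => ?_
  rw [← Finset.sum_add_distrib]
  refine Finset.sum_congr rfl fun t ht => ?_
  simp only [mem_range] at hm
  simp only [mem_Icc] at ht
  rw [show hh N (n-1-m-t) * (hh N (k+t) * s N m) = hh N (k+t) * hh N (n-1-m-t) * s N m
      from by ring,
    show hh N (k+t) * (hh N (n-1-m-t) * s N m) = hh N (k+t) * hh N (n-1-m-t) * s N m
      from by ring,
    ← natCast_zsmul (hh N (k+t) * hh N (n-1-m-t) * s N m) (m+t), ← add_smul]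
  congr 1
  omega
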